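/- Suppose β₂ = 0, and b, α, β₁, k₁, k₂ are strictly positive with β₁k₁ > b + α. Then the set of fixed points of V in S³ is exactly {λ₁, λ₁₆}, where λ₁ = (1,0,0,0) and λ₁₆ = ((b+α)/(β₁k₁), b(β₁k₁−b−α)/(β₁k₁(b+α)), α(β₁k₁−b−α)/(β₁k₁(b+α)), 0). -/
import Mathlib


/-- The discrete-time SISI epidemic operator. -/
noncomputable def sisiV (b α β₁ β₂ k₁ k₂ : ℝ) (p : ℝ × ℝ × ℝ × ℝ) : ℝ × ℝ × ℝ × ℝ :=
  (p.1 + b - b * p.1 - β₁ * (k₁ * p.2.1 + k₂ * p.2.2.2) * p.1,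
   p.2.1 - b * p.2.1 - α * p.2.1 + β₁ * (k₁ * p.2.1 + k₂ * p.2.2.2) * p.1,
   p.2.2.1 - b * p.2.2.1 + α * p.2.1 - β₂ * (k₁ * p.2.1 + k₂ * p.2.2.2) * p.2.2.1,
   p.2.2.2 - b * p.2.2.2 + β₂ * (k₁ * p.2.1 + k₂ * p.2.2.2) * p.2.2.1)

/-- The simplex S³ in ℝ⁴. -/
def simplexS3 : Set (ℝ × ℝ × ℝ × ℝ) :=
  {p | 0 ≤ p.1 ∧ 0 ≤ p.2.1 ∧ 0 ≤ p.2.2.1 ∧ 0 ≤ p.2.2.2 ∧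
       p.1 + p.2.1 + p.2.2.1 + p.2.2.2 = 1}

theorem fixedPoints_beta2_zero (b α β₁ β₂ k₁ k₂ : ℝ)
    (hβ₂ : β₂ = 0) (hb : 0 < b) (hα : 0 < α) (hβ₁ : 0 < β₁)
    (hk₁ : 0 < k₁) (hk₂ : 0 < k₂) (hgt : β₁ * k₁ > b + α) :
    {p : ℝ × ℝ × ℝ × ℝ | p ∈ simplexS3 ∧ sisiV b α β₁ β₂ k₁ k₂ p = p} =
      {((1 : ℝ), (0 : ℝ), (0 : ℝ), (0 : ℝ)),
       ((b + α) / (β₁ * k₁),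
        b * (β₁ * k₁ - b - α) / (β₁ * k₁ * (b + α)),
        α * (β₁ * k₁ - b - α) / (β₁ * k₁ * (b + α)),
        (0 : ℝ))} := by
  subst hβ₂
  have hbα : (0:ℝ) < b + α := by linarith
  have hβk : (0:ℝ) < β₁ * k₁ := by positivity
  have hbαne : (b + α) ≠ 0 := ne_of_gt hbα
  have hβkne : (β₁ * k₁) ≠ 0 := ne_of_gt hβk
  ext ⟨x, u, y, v⟩
  simp only [Set.mem_setOf_eq, simplexS3, sisiV, Set.mem_insert_iff,
    Set.mem_singleton_iff, Prod.mk.injEq, zero_mul, sub_zero, add_zero]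
  constructor
  · rintro ⟨⟨hx, hu, hy, hv, hsum⟩, e1, e2, e3, e4⟩
    have hv0 : v = 0 := by
      have : b * v = 0 := by linarith [e4]
      exact (mul_eq_zero.mp this).resolve_left (ne_of_gt hb)
    subst hv0
    rcases eq_or_ne u 0 with hu0 | hu0
    · subst hu0
      left
      have hy0 : y = 0 := by
        have : b * y = 0 := by linarith [e3]
        exact (mul_eq_zero.mp this).resolve_left (ne_of_gt hb)
      subst hy0
      refine ⟨?_, rfl, rfl, rfl⟩
      have : b * (1 - x) = 0 := by nlinarith [e1]
      have := (mul_eq_zero.mp this).resolve_left (ne_of_gt hb)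
      linarith
    · right
      have key : u * (β₁ * k₁ * x) = u * (b + α) := by linear_combination e2
      have hx3 : β₁ * k₁ * x = b + α := mul_left_cancel₀ hu0 key
      have h5 : (b + α) * u = b * (1 - x) := by linear_combination -e1 - u * hx3
      have hu2 : β₁ * k₁ * (b + α) * u = b * (β₁ * k₁ - b - α) := by
        linear_combination β₁ * k₁ * h5 - b * hx3
      have hyb : b * y = α * u := by linear_combination -e3
      have hy2 : β₁ * k₁ * (b + α) * y = α * (β₁ * k₁ - b - α) := by
        have h : b * (β₁ * k₁ * (b + α) * y) = b * (α * (β₁ * k₁ - b - α)) := by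
          linear_combination β₁ * k₁ * (b + α) * hyb + α * hu2
        exact mul_left_cancel₀ (ne_of_gt hb) h
      refine ⟨?_, ?_, ?_, rfl⟩
      · field_simp
        linear_combination hx3
      · field_simp
        linear_combination hu2
      · field_simp
        linear_combination hy2
  · rintro (⟨h1, h2, h3, h4⟩ | ⟨h1, h2, h3, h4⟩) <;> subst h1 <;> subst h2 <;>
      subst h3 <;> subst h4
    · norm_num
    · have hnum : (0:ℝ) < β₁ * k₁ - b - α := by linarith
      refine ⟨⟨by positivity, by positivity, by positivity, le_refl 0, ?_⟩, ?_, ?_, ?_, by ring⟩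
      · field_simp
        ring
      · field_simp
        ring
      · field_simp
        ring
      · field_simp
        ring
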